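/- The Euclidean distance in ℝ³ between the segment with endpoints (0,0,0) and (2,3,3) and the segment with endpoints (3,2,0) and (0,1,2) equals 1/√299. -/

import Mathlib

/-- The infimum of Euclidean distances between points of two sets. -/
noncomputable def setDist {E : Type*} [PseudoMetricSpace E] (P Q : Set E) : ℝ :=
  sInf (Set.image2 dist P Q)

theorem stmt_12 :
    setDist (segment ℝ ((WithLp.equiv 2 (Fin 3 → ℝ)).symm ![0, 0, 0]) ((WithLp.equiv 2 (Fin 3 → ℝ)).symm ![2, 3, 3]))
        (segment ℝ ((WithLp.equiv 2 (Fin 3 → ℝ)).symm ![3, 2, 0]) ((WithLp.equiv 2 (Fin 3 → ℝ)).symm ![0, 1, 2])) =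
      1 / Real.sqrt 299 := by
  have hkey : (1:ℝ) / Real.sqrt 299 = Real.sqrt (1/299) := by
    rw [one_div, one_div, ← Real.sqrt_inv]
  unfold setDist
  apply le_antisymm
  · apply csInf_le
    · exact ⟨0, by rintro d ⟨p, hp, q, hq, rfl⟩; exact dist_nonneg⟩
    · refine ⟨_, ⟨164/299, 135/299, by norm_num, by norm_num, by norm_num, rfl⟩,
        _, ⟨93/299, 206/299, by norm_num, by norm_num, by norm_num, rfl⟩, ?_⟩
      rw [hkey, EuclideanSpace.dist_eq]
      congr 1
      simp [Fin.sum_univ_three, PiLp.toLp_apply, PiLp.add_apply, PiLp.smul_apply,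
        Real.dist_eq]
      norm_num
  · apply le_csInf
    · exact ⟨_, _, left_mem_segment ℝ _ _, _, left_mem_segment ℝ _ _, rfl⟩
    · rintro d ⟨p, ⟨a, t, ha, ht, hat, rfl⟩, q, ⟨b, s, hb, hs, hbs, rfl⟩, rfl⟩
      rw [hkey, EuclideanSpace.dist_eq]
      apply Real.sqrt_le_sqrt
      have ha' : a = 1 - t := by linarith
      have hb' : b = 1 - s := by linarith
      subst ha' hb'
      simp [Fin.sum_univ_three, PiLp.toLp_apply, PiLp.add_apply, PiLp.smul_apply,
        Real.dist_eq, sq_abs]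
      nlinarith [sq_nonneg (22*(t - 135/299) + 3*(s - 206/299)), sq_nonneg (s - 206/299),
        sq_nonneg (t - 135/299)]
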